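/- For every half-integer b (i.e., 2b an odd integer, b ≠ 0), lim_{n→∞} ( ∑_{j=1}^{n} 1/(j+b) − H(n) ) = −1/(2b) + (π/2)·∫₀¹ (−1 + u + cos(πbu))·cot(πu/2) du. -/

import Mathlib

open Real Filter intervalIntegral

open MeasureTheory Set Topology

/-- The harmonic number `H(n) = ∑_{j=1}^n 1/j`. -/
noncomputable def harmonicR (n : ℕ) : ℝ := ∑ j ∈ Finset.range n, (1 : ℝ) / (j + 1)



lemma intervalIntegrable_neg_log_01 :
    IntervalIntegrable (fun x : ℝ => -Real.log x) volume 0 1 := by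
  constructor
  · exact integrableOn_deriv_of_nonneg
      (by fun_prop : Continuous fun x : ℝ => x - x * Real.log x).continuousOn
      (fun x hx => by
        exact ((hasDerivAt_id x).sub (Real.hasDerivAt_mul_log (ne_of_gt hx.1))).congr_deriv (by ring))
      (fun x hx => by
        simp only [neg_nonneg]
        exact Real.log_nonpos (le_of_lt hx.1) hx.2.le)
  · simp [intervalIntegrable_iff, Set.uIoc_of_le, Ioc_eq_empty_of_le zero_le_one,
      MeasureTheory.integrableOn_empty]

lemma intervalIntegrable_log_0c {c : ℝ} (hc : 1 ≤ c) :
    IntervalIntegrable Real.log volume 0 c := by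
  have h1 : IntervalIntegrable Real.log volume 0 1 := by
    have h := intervalIntegrable_neg_log_01.neg
    have : (-fun x : ℝ => -Real.log x) = Real.log := by funext x; simp
    rwa [this] at h
  refine h1.trans (intervalIntegrable_log ?_)
  rw [Set.uIcc_of_le hc]
  intro h; exact absurd h.1 (by norm_num)

lemma intervalIntegrable_log_sin_0 : IntervalIntegrable (fun x => Real.log (Real.sin x))
    volume 0 (π / 2) := by
  have hπ : (1:ℝ) ≤ π / 2 := by nlinarith [Real.pi_gt_three]
  have hg : IntervalIntegrable (fun x : ℝ => Real.log (π/2) - Real.log x) volume 0 (π/2) :=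
    (_root_.intervalIntegrable_const).sub (intervalIntegrable_log_0c hπ)
  refine hg.mono_fun' ?_ ?_
  · exact (Real.measurable_log.comp Real.continuous_sin.measurable).aestronglyMeasurable
  · rw [Filter.EventuallyLE, ae_restrict_iff' measurableSet_uIoc]
    refine Eventually.of_forall fun x hx => ?_
    rw [Set.uIoc_of_le (by linarith : (0:ℝ) ≤ π/2)] at hx
    have hx0 : 0 < x := hx.1
    have hx2 : x ≤ π / 2 := hx.2
    have hs0 : 0 < Real.sin x := Real.sin_pos_of_pos_of_lt_pi hx0
      (lt_of_le_of_lt hx2 (by linarith [Real.pi_pos]))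
    have hlow : 2 / π * x ≤ Real.sin x := Real.mul_le_sin hx0.le hx2
    have hub : Real.log (Real.sin x) ≤ 0 :=
      Real.log_nonpos hs0.le (Real.sin_le_one x)
    have hlb : Real.log x - Real.log (π/2) ≤ Real.log (Real.sin x) := by
      have : Real.log (2 / π * x) ≤ Real.log (Real.sin x) :=
        Real.log_le_log (by positivity) hlow
      have h2 : Real.log (2 / π * x) = Real.log x - Real.log (π/2) := by
        rw [Real.log_mul (by positivity) hx0.ne', show (2:ℝ)/π = (π/2)⁻¹ by
          rw [inv_div], Real.log_inv]
        ring
      linarith [h2 ▸ this]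
    have : |Real.log (Real.sin x)| ≤ Real.log (π/2) - Real.log x := by
      rw [abs_le]; constructor <;> linarith
    simpa [Real.norm_eq_abs] using this

lemma one_sub_cos_le_half_sq (t : ℝ) : 1 - Real.cos t ≤ t^2 / 2 := by
  have h1 : Real.cos (t/2) ^ 2 = 1/2 + Real.cos t / 2 := by
    have := Real.cos_sq (t/2)
    rwa [show 2 * (t/2) = t by ring] at this
  have h2 : Real.sin (t/2) ^ 2 ≤ (t/2)^2 := Real.sin_sq_le_sq
  have h3 : Real.sin (t/2) ^2 + Real.cos (t/2) ^2 = 1 := Real.sin_sq_add_cos_sq (t/2)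
  nlinarith

lemma sin_half_pos {u : ℝ} (h0 : 0 < u) (h1 : u ≤ 1) : 0 < Real.sin (π * u / 2) := by
  apply Real.sin_pos_of_pos_of_lt_pi (by positivity)
  nlinarith [Real.pi_pos]

lemma le_sin_half {u : ℝ} (h0 : 0 ≤ u) (h1 : u ≤ 1) : u ≤ Real.sin (π * u / 2) := by
  have := Real.mul_le_sin (x := π * u / 2) (by positivity) (by nlinarith [Real.pi_pos])
  have hπ : (2 / π) * (π * u / 2) = u := by field_simp
  linarith [hπ ▸ this]

lemma measurable_fb (b : ℝ) : Measurable
    (fun u : ℝ => (-1 + u + Real.cos (π * b * u)) * Real.cot (π * u / 2)) := by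
  apply Measurable.mul
  · fun_prop
  · have : (fun u : ℝ => Real.cot (π * u / 2))
        = fun u => Real.cos (π * u / 2) / Real.sin (π * u / 2) := by
      funext u; rw [Real.cot_eq_cos_div_sin]
    rw [this]
    fun_prop

lemma intervalIntegrable_fb (b : ℝ) : IntervalIntegrable
    (fun u : ℝ => (-1 + u + Real.cos (π * b * u)) * Real.cot (π * u / 2)) volume 0 1 := by
  refine IntervalIntegrable.mono_fun' (g := fun _ => 1 + (π*b)^2/2)
    _root_.intervalIntegrable_const ((measurable_fb b).aestronglyMeasurable) ?_
  rw [Filter.EventuallyLE, ae_restrict_iff' measurableSet_uIoc]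
  refine Eventually.of_forall fun u hu => ?_
  rw [Set.uIoc_of_le (by norm_num : (0:ℝ) ≤ 1)] at hu
  obtain ⟨h0, h1⟩ := hu
  have hs := sin_half_pos h0 h1
  have hsu := le_sin_half h0.le h1
  have hcot : |Real.cot (π * u / 2)| ≤ 1 / u := by
    rw [Real.cot_eq_cos_div_sin, abs_div]
    apply div_le_div₀ (by positivity) (Real.abs_cos_le_one _) h0
    rw [abs_of_pos hs]; linarith
  have hnum : |(-1 + u + Real.cos (π * b * u))| ≤ u + (π*b)^2 * u^2 / 2 := by
    have hc1 : 1 - Real.cos (π*b*u) ≤ (π*b*u)^2/2 := one_sub_cos_le_half_sq _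
    have hc2 : Real.cos (π*b*u) ≤ 1 := Real.cos_le_one _
    rw [abs_le]
    constructor <;> nlinarith
  calc ‖(-1 + u + Real.cos (π * b * u)) * Real.cot (π * u / 2)‖
      = |(-1 + u + Real.cos (π * b * u))| * |Real.cot (π * u / 2)| := abs_mul _ _
    _ ≤ (u + (π*b)^2 * u^2 / 2) * (1/u) := by
        apply mul_le_mul hnum hcot (abs_nonneg _) (by positivity)
    _ = 1 + (π*b)^2 * u / 2 := by field_simp
    _ ≤ 1 + (π*b)^2/2 := by nlinarith [sq_nonneg (π*b)]

lemma intervalIntegrable_log_cos_0 : IntervalIntegrable (fun x => Real.log (Real.cos x))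
    volume 0 (π / 2) := by
  have h := intervalIntegrable_log_sin_0.comp_sub_left (π/2)
  simp only [Real.sin_pi_div_two_sub] at h
  simpa using h.symm

lemma integral_log_cos_eq : (∫ x in (0:ℝ)..(π/2), Real.log (Real.cos x))
    = ∫ x in (0:ℝ)..(π/2), Real.log (Real.sin x) := by
  have h := intervalIntegral.integral_comp_sub_left (fun x => Real.log (Real.sin x)) (π/2)
    (a := 0) (b := π/2)
  simp only [Real.sin_pi_div_two_sub, sub_self, sub_zero] at h
  rw [← h]

lemma intervalIntegrable_log_sin' : IntervalIntegrable (fun x => Real.log (Real.sin x))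
    volume (π/2) π := by
  have h := intervalIntegrable_log_sin_0.comp_sub_left π
  simp only [Real.sin_pi_sub] at h
  have h2 : π - π/2 = π/2 := by ring
  simpa [h2] using h.symm

lemma integral_log_sin_eq : ∫ x in (0:ℝ)..(π/2), Real.log (Real.sin x) = -(π/2) * Real.log 2 := by
  set L := ∫ x in (0:ℝ)..(π/2), Real.log (Real.sin x) with hL
  -- ∫_{π/2}^{π} log sin = L
  have hrefl : ∫ x in (π/2: ℝ)..π, Real.log (Real.sin x) = L := by
    have h := intervalIntegral.integral_comp_sub_left (fun x => Real.log (Real.sin x)) π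
      (a := 0) (b := π/2)
    simp only [Real.sin_pi_sub, sub_zero] at h
    rw [← hL] at h
    have h3 : π - π / 2 = π / 2 := by ring
    rw [h3] at h
    exact h.symm
  have hsplit : ∫ x in (0:ℝ)..π, Real.log (Real.sin x) = 2 * L := by
    rw [← intervalIntegral.integral_add_adjacent_intervals
      (b := π/2) intervalIntegrable_log_sin_0 intervalIntegrable_log_sin', hrefl, ← hL]
    ring
  have hdouble : ∫ x in (0:ℝ)..(π/2), Real.log (Real.sin (2*x)) = L := by
    have h := intervalIntegral.integral_comp_mul_left (fun x => Real.log (Real.sin x))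
      (a := 0) (b := π/2) (c := 2) two_ne_zero
    rw [h]
    have h4 : 2 * (π/2) = π := by ring
    rw [h4]
    simp only [mul_zero, smul_eq_mul, hsplit]
    ring
  have hexpand : ∫ x in (0:ℝ)..(π/2), Real.log (Real.sin (2*x))
      = ∫ x in (0:ℝ)..(π/2), (Real.log 2 + Real.log (Real.sin x) + Real.log (Real.cos x)) := by
    apply intervalIntegral.integral_congr_ae
    have hne : ∀ᵐ x : ℝ, x ≠ π/2 := by
      rw [MeasureTheory.ae_iff]
      have : {x : ℝ | ¬ x ≠ π/2} = {π/2} := by ext x; simp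
      rw [this]; exact Real.volume_singleton
    filter_upwards [hne] with x hx hmem
    rw [Set.uIoc_of_le (by positivity : (0:ℝ) ≤ π/2)] at hmem
    have hx0 : 0 < x := hmem.1
    have hx2 : x < π / 2 := lt_of_le_of_ne hmem.2 hx
    have hs : 0 < Real.sin x := Real.sin_pos_of_pos_of_lt_pi hx0 (by linarith [Real.pi_pos])
    have hc : 0 < Real.cos x := Real.cos_pos_of_mem_Ioo ⟨by linarith [Real.pi_pos], hx2⟩
    rw [Real.sin_two_mul, Real.log_mul (by positivity) hc.ne', Real.log_mul two_ne_zero hs.ne']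
  have hsum : ∫ x in (0:ℝ)..(π/2), (Real.log 2 + Real.log (Real.sin x) + Real.log (Real.cos x))
      = (π/2) * Real.log 2 + L + L := by
    rw [intervalIntegral.integral_add (_root_.intervalIntegrable_const.add
        intervalIntegrable_log_sin_0) intervalIntegrable_log_cos_0,
      intervalIntegral.integral_add _root_.intervalIntegrable_const intervalIntegrable_log_sin_0,
      intervalIntegral.integral_const, integral_log_cos_eq, ← hL]
    simp [smul_eq_mul, mul_comm]
  have : L = (π/2) * Real.log 2 + L + L := by rw [← hsum, ← hexpand, hdouble]
  linarith

lemma integral_g (b : ℝ) (hb : Real.cos (π * b) = 0) (hb0 : b ≠ 0) (hb1 : b + 1 ≠ 0) :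
    ∫ u in (0:ℝ)..1, -(Real.sin (π*(b+1)*u) + Real.sin (π*b*u))
      = - 1/(π*(b+1)) - 1/(π*b) := by
  have hπ : π ≠ 0 := Real.pi_ne_zero
  have hD : ∀ u : ℝ, HasDerivAt
      (fun u : ℝ => Real.cos (π*(b+1)*u)/(π*(b+1)) + Real.cos (π*b*u)/(π*b))
      (-(Real.sin (π*(b+1)*u) + Real.sin (π*b*u))) u := by
    intro u
    have h1 : HasDerivAt (fun u : ℝ => Real.cos (π*(b+1)*u)) (-Real.sin (π*(b+1)*u) * (π*(b+1))) u := by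
      exact ((Real.hasDerivAt_cos (π*(b+1)*u)).comp u
        ((hasDerivAt_id u).const_mul (π*(b+1)))).congr_deriv (by ring)
    have h2 : HasDerivAt (fun u : ℝ => Real.cos (π*b*u)) (-Real.sin (π*b*u) * (π*b)) u := by
      exact ((Real.hasDerivAt_cos (π*b*u)).comp u ((hasDerivAt_id u).const_mul (π*b))).congr_deriv (by ring)
    have := (h1.div_const (π*(b+1))).add (h2.div_const (π*b))
    refine this.congr_deriv (Eq.symm ?_)
    field_simp
    ring
  rw [intervalIntegral.integral_eq_sub_of_hasDerivAt (fun u _ => hD u)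
    (by apply Continuous.intervalIntegrable; fun_prop)]
  have hc1 : Real.cos (π*(b+1)) = 0 := by
    have : π*(b+1) = π*b + π := by ring
    rw [this, Real.cos_add_pi, hb, neg_zero]
  simp only [mul_one, mul_zero, Real.cos_zero, hc1, hb]
  field_simp
  ring

lemma integral_step (b : ℝ) (hb : Real.cos (π * b) = 0) (hb0 : b ≠ 0) (hb1 : b + 1 ≠ 0) :
    ∫ u in (0:ℝ)..1, (-1 + u + Real.cos (π*(b+1)*u)) * Real.cot (π*u/2)
      = (∫ u in (0:ℝ)..1, (-1 + u + Real.cos (π*b*u)) * Real.cot (π*u/2))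
        - 1/(π*(b+1)) - 1/(π*b) := by
  have key : ∀ u ∈ Set.uIcc (0:ℝ) 1,
      (-1 + u + Real.cos (π*(b+1)*u)) * Real.cot (π*u/2)
        = (-1 + u + Real.cos (π*b*u)) * Real.cot (π*u/2)
          + (-(Real.sin (π*(b+1)*u) + Real.sin (π*b*u))) := by
    intro u hu
    rw [Set.uIcc_of_le (by norm_num : (0:ℝ) ≤ 1)] at hu
    rcases eq_or_lt_of_le hu.1 with h0 | h0
    · rw [← h0]; simp [Real.cot_eq_cos_div_sin]
    · have hs := sin_half_pos h0 hu.2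
      have hdiff : (Real.cos (π*(b+1)*u) - Real.cos (π*b*u)) * Real.cot (π*u/2)
          = -(Real.sin (π*(b+1)*u) + Real.sin (π*b*u)) := by
        rw [Real.cos_sub_cos, Real.cot_eq_cos_div_sin]
        have e1 : (π*(b+1)*u - π*b*u)/2 = π*u/2 := by ring
        rw [e1]
        have e2 : Real.sin (π*(b+1)*u) + Real.sin (π*b*u)
            = 2 * Real.sin ((π*(b+1)*u + π*b*u)/2) * Real.cos (π*u/2) := by
          have eA : π*(b+1)*u = (π*(b+1)*u + π*b*u)/2 + π*u/2 := by ring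
          have eB : π*b*u = (π*(b+1)*u + π*b*u)/2 - π*u/2 := by ring
          rw [eA, eB, Real.sin_add, Real.sin_sub]
          ring
        rw [e2]
        field_simp
      nlinarith [hdiff]
  rw [intervalIntegral.integral_congr key,
    intervalIntegral.integral_add (intervalIntegrable_fb b)
      (by apply Continuous.intervalIntegrable; fun_prop),
    integral_g b hb hb0 hb1]
  ring


lemma harmonicR_eq (n : ℕ) : harmonicR n = (harmonic n : ℝ) := by
  unfold harmonicR harmonic
  push_cast
  simp [one_div]

lemma sum_shift (b : ℝ) (n : ℕ) :
    ∑ j ∈ Finset.range n, 1 / ((j:ℝ) + 1 + (b+1))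
      = (∑ j ∈ Finset.range n, 1 / ((j:ℝ) + 1 + b)) - 1/(1+b) + 1/((n:ℝ)+1+b) := by
  induction n with
  | zero => simp
  | succ n ih =>
    rw [Finset.sum_range_succ, Finset.sum_range_succ, ih]
    push_cast
    have e : ((n:ℝ) + 1 + (b+1)) = (n:ℝ)+1+1+b := by ring
    rw [e]
    ring

lemma sum_base (n : ℕ) : ∑ j ∈ Finset.range n, 1 / ((j:ℝ) + 1 + 1/2)
    = 2 * (harmonic (2*n+1) : ℝ) - (harmonic n : ℝ) - 2 := by
  induction n with
  | zero => norm_num [harmonic]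
  | succ n ih =>
    rw [Finset.sum_range_succ, ih]
    have e1 : 2*(n+1)+1 = (2*n+1) + 1 + 1 := by ring
    rw [e1, harmonic_succ (2*n+1+1), harmonic_succ (2*n+1), harmonic_succ n]
    push_cast
    have h1 : (n:ℝ) + 1 + 1/2 ≠ 0 := by positivity
    have h2 : (2*(n:ℝ)+1) + 1 ≠ 0 := by positivity
    have h3 : (2*(n:ℝ)+1) + 1 + 1 ≠ 0 := by positivity
    have h4 : (n:ℝ) + 1 ≠ 0 := by positivity
    field_simp
    ring

lemma base_tendsto :
    Tendsto (fun n : ℕ => (∑ j ∈ Finset.range n, 1 / ((j:ℝ) + 1 + 1/2)) - harmonicR n)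
      atTop (𝓝 (2 * Real.log 2 - 2)) := by
  have h1 := Real.tendsto_harmonic_sub_log
  have h2 : Tendsto (fun n : ℕ => 2*n+1) atTop atTop :=
    tendsto_atTop_mono (f := fun n : ℕ => n) (fun n => by show n ≤ 2*n+1; omega) tendsto_id
  have h3 := h1.comp h2
  have h4 : Tendsto (fun n : ℕ => Real.log (2 + 1/(n:ℝ))) atTop (𝓝 (Real.log 2)) := by
    have ht : Tendsto (fun n : ℕ => 2 + 1/(n:ℝ)) atTop (𝓝 2) := by
      simpa using tendsto_const_nhds.add (tendsto_one_div_atTop_nhds_zero_nat (𝕜 := ℝ))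
    exact ((Real.continuousAt_log (by norm_num)).tendsto.comp ht)
  have hmain := (((h3.sub h1).add h4).const_mul 2).sub_const 2
  simp only [sub_self, zero_add, Function.comp_def] at hmain
  refine hmain.congr' ?_
  · filter_upwards [eventually_ge_atTop 1] with n hn
    have hn0 : (n:ℝ) ≠ 0 := Nat.cast_ne_zero.2 (by omega)
    have hlog : Real.log (2 + 1/(n:ℝ)) = Real.log (2*(n:ℝ)+1) - Real.log n := by
      rw [← Real.log_div (by positivity) hn0]
      congr 1
      field_simp
    rw [sum_base, harmonicR_eq]
    push_cast
    rw [hlog]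
    ring

noncomputable def Phi (u : ℝ) : ℝ :=
  (2/π) * (u * Real.log (Real.sin (π*u/2)) - Real.log (2 * Real.cos (π*u/4)^2)
    + Real.cos (π*u/2))

lemma cos_quarter_pos {u : ℝ} (h0 : 0 ≤ u) (h1 : u ≤ 1) : 0 < Real.cos (π*u/4) := by
  apply Real.cos_pos_of_mem_Ioo
  constructor
  · nlinarith [Real.pi_pos]
  · nlinarith [Real.pi_pos]

lemma continuousOn_Phi : ContinuousOn Phi (Icc 0 1) := by
  unfold Phi
  apply ContinuousOn.mul continuousOn_const
  apply ContinuousOn.add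
  apply ContinuousOn.sub
  · -- u * log (sin (π u / 2))
    intro u hu
    rcases eq_or_lt_of_le hu.1 with h0 | h0
    · -- continuity at 0 via squeeze
      rw [← h0]
      unfold ContinuousWithinAt
      have hval : ((fun x => x * Real.log (Real.sin (π*x/2))) 0 : ℝ) = 0 := by simp
      rw [hval]
      apply squeeze_zero_norm' (a := fun t => -(t * Real.log t))
      · filter_upwards [eventually_mem_nhdsWithin] with t ht
        rcases eq_or_lt_of_le ht.1 with h0' | h0'
        · rw [← h0']; simp
        · have hs := sin_half_pos h0' ht.2
          have hts := le_sin_half h0'.le ht.2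
          have hlb : Real.log t ≤ Real.log (Real.sin (π*t/2)) := Real.log_le_log h0' hts
          have hub : Real.log (Real.sin (π*t/2)) ≤ 0 :=
            Real.log_nonpos hs.le (Real.sin_le_one _)
          rw [Real.norm_eq_abs, abs_mul, abs_of_pos h0', abs_of_nonpos hub]
          nlinarith
      · have hc : Continuous fun t : ℝ => -(t * Real.log t) := Real.continuous_mul_log.neg
        have := (hc.tendsto 0).mono_left (nhdsWithin_le_nhds (s := Icc (0:ℝ) 1))
        simpa using this
    · apply ContinuousWithinAt.mono (s := Icc 0 1) ?_ (fun x hx => hx)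
      apply ContinuousAt.continuousWithinAt
      have hs := sin_half_pos h0 hu.2
      exact continuousAt_id.mul (ContinuousAt.log (by fun_prop) hs.ne')
  · -- log (2 cos^2)
    apply ContinuousOn.log (by fun_prop)
    intro u hu
    have := cos_quarter_pos hu.1 hu.2
    positivity
  · fun_prop

lemma hasDerivAt_Phi {x : ℝ} (h0 : 0 < x) (h1 : x < 1) :
    HasDerivAt Phi ((-1 + x + Real.cos (π*x/2)) * Real.cot (π*x/2)
      + (2/π) * Real.log (Real.sin (π*x/2))) x := by
  have hπ : (0:ℝ) < π := Real.pi_pos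
  have hs : 0 < Real.sin (π*x/2) := sin_half_pos h0 h1.le
  have hc4 : 0 < Real.cos (π*x/4) := cos_quarter_pos h0.le h1.le
  -- inner linear functions
  have hin2 : HasDerivAt (fun u : ℝ => π*u/2) (π/2) x := by
    simpa using ((hasDerivAt_id x).const_mul π).div_const 2
  have hin4 : HasDerivAt (fun u : ℝ => π*u/4) (π/4) x := by
    simpa using ((hasDerivAt_id x).const_mul π).div_const 4
  have hsin : HasDerivAt (fun u : ℝ => Real.sin (π*u/2)) (Real.cos (π*x/2) * (π/2)) x :=
    by have := (Real.hasDerivAt_sin (π*x/2)).comp x hin2; exact this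
  have hcos : HasDerivAt (fun u : ℝ => Real.cos (π*u/2)) (-Real.sin (π*x/2) * (π/2)) x :=
    by have := (Real.hasDerivAt_cos (π*x/2)).comp x hin2; exact this
  have hcos4 : HasDerivAt (fun u : ℝ => Real.cos (π*u/4)) (-Real.sin (π*x/4) * (π/4)) x :=
    by have := (Real.hasDerivAt_cos (π*x/4)).comp x hin4; exact this
  have hlog1 : HasDerivAt (fun u : ℝ => Real.log (Real.sin (π*u/2)))
      ((Real.sin (π*x/2))⁻¹ * (Real.cos (π*x/2) * (π/2))) x :=
    by have := (Real.hasDerivAt_log hs.ne').comp x hsin; exact this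
  have hT1 : HasDerivAt (fun u : ℝ => u * Real.log (Real.sin (π*u/2)))
      (1 * Real.log (Real.sin (π*x/2))
        + x * ((Real.sin (π*x/2))⁻¹ * (Real.cos (π*x/2) * (π/2)))) x :=
    (hasDerivAt_id x).mul hlog1
  have hv : HasDerivAt (fun u : ℝ => 2 * Real.cos (π*u/4)^2)
      (2 * (2 * Real.cos (π*x/4) * (-Real.sin (π*x/4) * (π/4)))) x := by
    have := (hcos4.pow 2).const_mul 2
    simpa [mul_comm, mul_assoc, mul_left_comm] using this
  have hT2 : HasDerivAt (fun u : ℝ => Real.log (2 * Real.cos (π*u/4)^2))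
      ((2 * Real.cos (π*x/4)^2)⁻¹
        * (2 * (2 * Real.cos (π*x/4) * (-Real.sin (π*x/4) * (π/4))))) x :=
    (Real.hasDerivAt_log (by positivity)).comp x hv
  have hall := (((hT1.sub hT2).add hcos).const_mul (2/π))
  have : Phi = fun u => (2/π) * (u * Real.log (Real.sin (π*u/2))
      - Real.log (2 * Real.cos (π*u/4)^2) + Real.cos (π*u/2)) := rfl
  rw [this]
  refine hall.congr_deriv (Eq.symm ?_)
  have hs2 : Real.sin (π*x/2) = 2 * Real.sin (π*x/4) * Real.cos (π*x/4) := by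
    rw [show π*x/2 = 2*(π*x/4) by ring, Real.sin_two_mul]
  have hc2 : Real.cos (π*x/2) = 2 * Real.cos (π*x/4)^2 - 1 := by
    rw [show π*x/2 = 2*(π*x/4) by ring, Real.cos_two_mul]
  have hpyth : Real.sin (π*x/4)^2 + Real.cos (π*x/4)^2 = 1 := Real.sin_sq_add_cos_sq _
  have hs4 : (0:ℝ) < Real.sin (π*x/4) := by
    apply Real.sin_pos_of_pos_of_lt_pi (by positivity)
    nlinarith
  have e1 : (2 * Real.cos (π*x/4)^2)⁻¹
      * (2 * (2 * Real.cos (π*x/4) * (-Real.sin (π*x/4) * (π/4))))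
      = -(π/2) * (Real.sin (π*x/4)/Real.cos (π*x/4)) := by
    field_simp
    ring
  have e2 : (2/π) * (1 * Real.log (Real.sin (π*x/2))
        + x * ((Real.sin (π*x/2))⁻¹ * (Real.cos (π*x/2) * (π/2)))
        - (-(π/2) * (Real.sin (π*x/4)/Real.cos (π*x/4)))
        + (-Real.sin (π*x/2) * (π/2)))
      = (2/π) * Real.log (Real.sin (π*x/2))
        + x * (Real.cos (π*x/2)/Real.sin (π*x/2))
        + Real.sin (π*x/4)/Real.cos (π*x/4) - Real.sin (π*x/2) := by
    field_simp
    ring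
  rw [e1, e2, Real.cot_eq_cos_div_sin]
  have key2 : (-1 + Real.cos (π*x/2)) * (Real.cos (π*x/2)/Real.sin (π*x/2))
      = Real.sin (π*x/4)/Real.cos (π*x/4) - Real.sin (π*x/2) := by
    rw [hs2, hc2]
    field_simp
    linear_combination (4*Real.cos (π*x/4)^2 - 2) * hpyth
  linear_combination key2

lemma intervalIntegrable_logsin01 :
    IntervalIntegrable (fun u : ℝ => Real.log (Real.sin (π*u/2))) volume 0 1 := by
  have h := intervalIntegrable_log_sin_0.comp_mul_left (c := π/2) (h := enorm_ne_top) (h' := enorm_ne_top)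
  have hπ : π/2 ≠ 0 := by positivity
  simp only [zero_div, div_self hπ] at h
  have e : (fun x : ℝ => Real.log (Real.sin (π/2 * x)))
      = fun u : ℝ => Real.log (Real.sin (π*u/2)) := by
    funext u; rw [show π/2*u = π*u/2 by ring]
  rwa [e] at h

lemma integral_logsin01 : ∫ u in (0:ℝ)..1, Real.log (Real.sin (π*u/2)) = -Real.log 2 := by
  have hπ : (π/2 : ℝ) ≠ 0 := by positivity
  have h := intervalIntegral.integral_comp_mul_left (a := (0:ℝ)) (b := 1)
    (fun x => Real.log (Real.sin x)) hπ
  have e : (fun x : ℝ => Real.log (Real.sin (π/2 * x)))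
      = fun u : ℝ => Real.log (Real.sin (π*u/2)) := by
    funext u; rw [show π/2*u = π*u/2 by ring]
  rw [e] at h
  rw [h]
  norm_num [integral_log_sin_eq]
  field_simp

lemma base_integral :
    ∫ u in (0:ℝ)..1, (-1 + u + Real.cos (π * u / 2)) * Real.cot (π * u / 2)
      = 2/π * (2*Real.log 2 - 1) := by
  have hπ : (0:ℝ) < π := Real.pi_pos
  have hfb : IntervalIntegrable
      (fun u : ℝ => (-1 + u + Real.cos (π*u/2)) * Real.cot (π*u/2)) volume 0 1 := by
    have h := intervalIntegrable_fb (1/2)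
    have e : (fun u : ℝ => (-1 + u + Real.cos (π*(1/2)*u)) * Real.cot (π*u/2))
        = fun u : ℝ => (-1 + u + Real.cos (π*u/2)) * Real.cot (π*u/2) := by
      funext u; rw [show π*(1/2)*u = π*u/2 by ring]
    rwa [e] at h
  have hlog := intervalIntegrable_logsin01.const_mul (2/π)
  have hFTC := intervalIntegral.integral_eq_sub_of_hasDeriv_right_of_le zero_le_one
    continuousOn_Phi
    (fun x hx => (hasDerivAt_Phi hx.1 hx.2).hasDerivWithinAt)
    (hfb.add hlog)
  rw [intervalIntegral.integral_add hfb hlog, intervalIntegral.integral_const_mul,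
    integral_logsin01] at hFTC
  have hPhi1 : Phi 1 = 0 := by
    unfold Phi
    rw [show π*1/2 = π/2 by ring, show π*1/4 = π/4 by ring, Real.sin_pi_div_two,
      Real.cos_pi_div_two, Real.cos_pi_div_four]
    rw [show (2:ℝ) * (Real.sqrt 2 / 2)^2 = (Real.sqrt 2)^2 / 2 by ring,
      Real.sq_sqrt (by norm_num : (2:ℝ) ≥ 0)]
    norm_num
  have hPhi0 : Phi 0 = (2/π) * (1 - Real.log 2) := by
    unfold Phi
    rw [show π*0/2 = 0 by ring, show π*0/4 = 0 by ring]
    simp only [Real.sin_zero, Real.cos_zero, Real.log_zero, mul_zero, zero_mul, one_pow,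
      mul_one]
    ring
  rw [hPhi1, hPhi0] at hFTC
  linarith [hFTC]


noncomputable def rhsVal (b : ℝ) : ℝ :=
  -1 / (2 * b) + (π / 2) *
    ∫ u in (0:ℝ)..1, (-1 + u + Real.cos (π * b * u)) * Real.cot (π * u / 2)

def Q (b : ℝ) : Prop :=
  Filter.Tendsto
    (fun n : ℕ => (∑ j ∈ Finset.range n, 1 / ((j : ℝ) + 1 + b)) - harmonicR n)
    Filter.atTop (nhds (rhsVal b))

lemma cos_pi_half_odd (k : ℤ) : Real.cos (π * ((k:ℝ) + 1/2)) = 0 := by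
  rw [show π * ((k:ℝ) + 1/2) = (k:ℝ) * π + π/2 by ring, Real.cos_add, Real.cos_pi_div_two,
    Real.sin_pi_div_two, Real.sin_int_mul_pi]
  ring

lemma rhs_step (b : ℝ) (hcos : Real.cos (π * b) = 0) (hb0 : b ≠ 0) (hb1 : b + 1 ≠ 0) :
    rhsVal (b+1) = rhsVal b - 1/(1+b) := by
  unfold rhsVal
  rw [integral_step b hcos hb0 hb1]
  have hπ : (0:ℝ) < π := Real.pi_pos
  have hb1' : (1:ℝ) + b ≠ 0 := fun h => hb1 (by linarith)
  field_simp
  ring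

lemma htail (b : ℝ) : Filter.Tendsto (fun n : ℕ => 1/((n:ℝ)+1+b)) Filter.atTop (nhds 0) := by
  have h0 : Filter.Tendsto (fun n : ℕ => ((n:ℝ)+(1+b))) Filter.atTop Filter.atTop :=
    tendsto_atTop_add_const_right _ (1+b) (tendsto_natCast_atTop_atTop (R := ℝ))
  have h : Filter.Tendsto (fun n : ℕ => ((n:ℝ)+1+b)) Filter.atTop Filter.atTop :=
    Filter.Tendsto.congr (fun n => by ring) h0
  simpa [one_div, Pi.inv_def] using h.inv_tendsto_atTop

lemma Q_step (b : ℝ) (hcos : Real.cos (π * b) = 0) : Q b ↔ Q (b+1) := by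
  have hb0 : b ≠ 0 := by
    rintro rfl; rw [mul_zero, Real.cos_zero] at hcos; norm_num at hcos
  have hb1 : b + 1 ≠ 0 := by
    rintro h
    have : b = -1 := by linarith
    rw [this] at hcos
    rw [show π * (-1 : ℝ) = -π by ring, Real.cos_neg, Real.cos_pi] at hcos
    norm_num at hcos
  have hrhs := rhs_step b hcos hb0 hb1
  constructor
  · intro hQ
    have h2 := (hQ.sub_const (1/(1+b))).add (htail b)
    unfold Q at h2 ⊢
    rw [hrhs]
    have : rhsVal b - 1/(1+b) + 0 = rhsVal b - 1/(1+b) := by ring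
    rw [← this]
    refine h2.congr fun n => ?_
    rw [sum_shift b n]
    ring
  · intro hQ
    have h2 := (hQ.add_const (1/(1+b))).sub (htail b)
    unfold Q at h2 ⊢
    have hval : rhsVal (b+1) + 1/(1+b) - 0 = rhsVal b := by rw [hrhs]; ring
    rw [hval] at h2
    refine h2.congr fun n => ?_
    rw [sum_shift b n]
    ring

lemma Q_base : Q (1/2) := by
  have hπ : (0:ℝ) < π := Real.pi_pos
  have hI : ∫ u in (0:ℝ)..1, (-1 + u + Real.cos (π*(1/2)*u)) * Real.cot (π*u/2)
      = 2/π * (2*Real.log 2 - 1) := by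
    rw [intervalIntegral.integral_congr
      (g := fun u => (-1 + u + Real.cos (π*u/2)) * Real.cot (π*u/2))
      (fun u _ => by rw [show π*(1/2)*u = π*u/2 by ring])]
    exact base_integral
  unfold Q rhsVal
  rw [hI]
  have hval : -1 / (2 * (1/2 : ℝ)) + π / 2 * (2/π * (2*Real.log 2 - 1))
      = 2 * Real.log 2 - 2 := by
    field_simp
    ring
  rw [hval]
  exact base_tendsto

lemma Q_half (k : ℤ) : Q ((k:ℝ) + 1/2) := by
  induction k using Int.induction_on with
  | zero => simpa using Q_base
  | succ i ih =>
    have h := (Q_step ((i:ℝ) + 1/2) (cos_pi_half_odd i)).1 ih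
    have e : ((i:ℝ) + 1/2) + 1 = ((i+1 : ℤ) : ℝ) + 1/2 := by push_cast; ring
    rwa [e] at h
  | pred i ih =>
    have hcos : Real.cos (π * (((-i-1 : ℤ) : ℝ) + 1/2)) = 0 := cos_pi_half_odd (-i-1)
    have h := (Q_step (((-i-1 : ℤ) : ℝ) + 1/2) hcos).2
    have e : (((-i-1 : ℤ) : ℝ) + 1/2) + 1 = ((-i : ℤ) : ℝ) + 1/2 := by push_cast; ring
    rw [e] at h
    exact h ih

theorem hp_sub_harmonic_limit_half_integer (b : ℝ) (hb : b ≠ 0)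
    (hb2 : ∃ z : ℤ, Odd z ∧ 2 * b = (z : ℝ)) :
    Filter.Tendsto
      (fun n : ℕ => (∑ j ∈ Finset.range n, 1 / ((j : ℝ) + 1 + b)) - harmonicR n)
      Filter.atTop
      (nhds (-1 / (2 * b) + (π / 2) *
        ∫ u in (0:ℝ)..1, (-1 + u + Real.cos (π * b * u)) * Real.cot (π * u / 2))) := by
  obtain ⟨z, ⟨k, hk⟩, h2b⟩ := hb2
  have hbk : b = (k:ℝ) + 1/2 := by
    rw [hk] at h2b
    push_cast at h2b
    linarith
  have h := Q_half k
  rw [← hbk] at h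
  exact h
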